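/- Under the trajectory distribution induced by any recommendation strategy g^ai, for every time t < T, every history realization h_t of positive probability, and every u^h ∈ 𝒰 such that P(U_t^h = u^h | H_t = h_t) > 0, the one-step predicted observation distribution depends on h_t only through the belief b_t^x and is independent of the human control law g^h: for all y' ∈ 𝒴, P(Y_{t+1} = y' | H_t = h_t, U_t^h = u^h) = Σ_{x' ∈ 𝒳} Σ_{x ∈ 𝒳} P(y'|x') · P(x'|x, u^h) · b_t^x(x). -/

import Mathlib

open scoped ENNReal

noncomputable section

namespace CPHS

variable {𝒳 𝒮 𝒴 𝒰 𝒲 𝒵 𝒩 : Type}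

/-- i.i.d. product PMF on vectors of length `n`. -/
def pmfVec {α : Type} (p : PMF α) : (n : ℕ) → PMF (Fin n → α)
  | 0 => PMF.pure Fin.elim0
  | n + 1 => (pmfVec p n).bind fun v => p.map fun a => Fin.snoc v a

/-- Safe getter for a vector of length `m + 1`. -/
def vget {α : Type} {m : ℕ} (v : Fin (m + 1) → α) (t : ℕ) : α :=
  v ⟨t % (m + 1), Nat.mod_lt _ (Nat.succ_pos m)⟩

/-- History at time `t`: observations `Y_{0:t}` and past actions `U^h_{0:t-1}`, `U^ai_{0:t-1}`. -/
def Hist (𝒴 𝒰 : Type) (t : ℕ) : Type :=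
  (Fin (t + 1) → 𝒴) × (Fin t → 𝒰) × (Fin t → 𝒰)

/-- Extension of a history by one step. -/
def Hist.ext {t : ℕ} (h : Hist 𝒴 𝒰 t) (y : 𝒴) (uh uai : 𝒰) : Hist 𝒴 𝒰 (t + 1) :=
  (Fin.snoc h.1 y, Fin.snoc h.2.1 uh, Fin.snoc h.2.2 uai)

/-- A recommendation strategy of the AI platform. -/
def Strat (𝒴 𝒰 : Type) : Type := (t : ℕ) → Hist 𝒴 𝒰 t → 𝒰

/-- The human–AI system model. -/
structure System (𝒳 𝒮 𝒴 𝒰 𝒲 𝒵 𝒩 : Type) where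
  T : ℕ
  pX0 : PMF 𝒳
  pS0 : PMF 𝒮
  pW : PMF 𝒲
  pZ : PMF 𝒵
  pN : PMF 𝒩
  f : 𝒳 → 𝒰 → 𝒲 → 𝒳
  o : 𝒳 → 𝒵 → 𝒴
  fh : 𝒮 → 𝒰 → 𝒴 → 𝒩 → 𝒮
  gh : 𝒮 → 𝒰 → 𝒰

namespace System

variable (M : System 𝒳 𝒮 𝒴 𝒰 𝒲 𝒵 𝒩)

/-- Primitive sample space: initial states and all noises. -/
abbrev Ω : Type :=
  𝒳 × 𝒮 × (Fin (M.T + 1) → 𝒲) × (Fin (M.T + 1) → 𝒵) × (Fin (M.T + 1) → 𝒩)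

/-- Joint PMF of the mutually independent primitive random variables. -/
def pΩ : PMF M.Ω :=
  M.pX0.bind fun x => M.pS0.bind fun s =>
    (pmfVec M.pW (M.T + 1)).bind fun w =>
      (pmfVec M.pZ (M.T + 1)).bind fun z =>
        (pmfVec M.pN (M.T + 1)).map fun n => (x, s, w, z, n)

/-- Trajectory `(X_t, S_t, H_t)` generated by strategy `g` from primitive randomness `ω`. -/
def traj (g : Strat 𝒴 𝒰) (ω : M.Ω) : (t : ℕ) → 𝒳 × 𝒮 × Hist 𝒴 𝒰 t
  | 0 => (ω.1, ω.2.1, (fun _ => M.o ω.1 (vget ω.2.2.2.1 0), Fin.elim0, Fin.elim0))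
  | t + 1 =>
      let p : 𝒳 × 𝒮 × Hist 𝒴 𝒰 t := traj g ω t
      let uai := g t p.2.2
      let uh := M.gh p.2.1 uai
      let x' := M.f p.1 uh (vget ω.2.2.1 t)
      let y' := M.o x' (vget ω.2.2.2.1 (t + 1))
      let s' := M.fh p.2.1 uai y' (vget ω.2.2.2.2 t)
      (x', s', Hist.ext p.2.2 y' uh uai)

/-- System state process. -/
def X (g : Strat 𝒴 𝒰) (ω : M.Ω) (t : ℕ) : 𝒳 := (M.traj g ω t).1
/-- Internal state process. -/
def S (g : Strat 𝒴 𝒰) (ω : M.Ω) (t : ℕ) : 𝒮 := (M.traj g ω t).2.1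
/-- History process. -/
def H (g : Strat 𝒴 𝒰) (ω : M.Ω) (t : ℕ) : Hist 𝒴 𝒰 t := (M.traj g ω t).2.2
/-- Observation process. -/
def Y (g : Strat 𝒴 𝒰) (ω : M.Ω) (t : ℕ) : 𝒴 := (M.H g ω t).1 (Fin.last t)
/-- AI recommendation process. -/
def Uai (g : Strat 𝒴 𝒰) (ω : M.Ω) (t : ℕ) : 𝒰 := g t (M.H g ω t)
/-- Human action process. -/
def Uh (g : Strat 𝒴 𝒰) (ω : M.Ω) (t : ℕ) : 𝒰 := M.gh (M.S g ω t) (M.Uai g ω t)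

/-- Probability of an event about the trajectory. -/
def pr (A : Set M.Ω) : ℝ := (M.pΩ.toOuterMeasure A).toReal

/-- Conditional probability `P(A | B)`. -/
def cpr (A B : Set M.Ω) : ℝ := M.pr (A ∩ B) / M.pr B

/-- Observation kernel `P(y | x')`. -/
def Po (y : 𝒴) (x' : 𝒳) : ℝ := (M.pZ.toOuterMeasure {z | M.o x' z = y}).toReal
/-- Transition kernel `P(x' | x, u)`. -/
def Pt (x' x : 𝒳) (u : 𝒰) : ℝ := (M.pW.toOuterMeasure {w | M.f x u w = x'}).toReal
/-- Internal-state kernel `P^h(s' | s, u, y)`. -/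
def Pn (s' s : 𝒮) (u : 𝒰) (y : 𝒴) : ℝ := (M.pN.toOuterMeasure {n | M.fh s u y n = s'}).toReal

/-- AI belief on the internal state, `b_t^s`. -/
def bS (g : Strat 𝒴 𝒰) {t : ℕ} (h : Hist 𝒴 𝒰 t) (s : 𝒮) : ℝ :=
  M.cpr {ω | M.S g ω t = s} {ω | M.H g ω t = h}

/-- AI belief on the system state, `b_t^x`. -/
def bX (g : Strat 𝒴 𝒰) {t : ℕ} (h : Hist 𝒴 𝒰 t) (x : 𝒳) : ℝ :=
  M.cpr {ω | M.X g ω t = x} {ω | M.H g ω t = h}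

/-- Conditional expectation `E[φ | B]`. -/
def cexp [Fintype 𝒳] [Fintype 𝒮] [Fintype 𝒲] [Fintype 𝒵] [Fintype 𝒩]
    (B : Set M.Ω) (φ : M.Ω → ℝ) : ℝ :=
  (∑ ω : M.Ω, Set.indicator B φ ω * (M.pΩ ω).toReal) / M.pr B

/-- Expected total discounted reward of a strategy. -/
def J [Fintype 𝒳] [Fintype 𝒮] [Fintype 𝒲] [Fintype 𝒵] [Fintype 𝒩]
    (g : Strat 𝒴 𝒰) (r : 𝒳 → 𝒰 → ℝ) (γ : ℝ) : ℝ :=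
  ∑ t ∈ Finset.range (M.T + 1), γ ^ t *
    ∑ ω : M.Ω, (M.pΩ ω).toReal * r (M.X g ω t) (M.Uh g ω t)


open Classical in
/-- The human's true conditional action distribution `P(U_t^h = u | h_t, u^ai)`. -/
def actDist [Fintype 𝒮] (g : Strat 𝒴 𝒰) {t : ℕ} (h : Hist 𝒴 𝒰 t) (uai u : 𝒰) : ℝ :=
  ∑ s, (if u = M.gh s uai then (1 : ℝ) else 0) * M.bS g h s

open Classical in
/-- One-step Bellman operator on histories, using the beliefs `b_t^s, b_t^x`. -/
def Qstep [Fintype 𝒳] [Fintype 𝒮] [Fintype 𝒴] [Fintype 𝒰]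
    (g : Strat 𝒴 𝒰) (r : 𝒳 → 𝒰 → ℝ) (γ : ℝ) {t : ℕ} (h : Hist 𝒴 𝒰 t) (u : 𝒰)
    (Vnext : Hist 𝒴 𝒰 (t + 1) → ℝ) : ℝ :=
  (∑ x, ∑ s, r x (M.gh s u) * M.bX g h x * M.bS g h s) +
    γ * ∑ y' : 𝒴, ∑ uh : 𝒰,
      (∑ s, (if uh = M.gh s u then (1 : ℝ) else 0) * M.bS g h s) *
        (∑ x', ∑ x, M.Po y' x' * M.Pt x' x uh * M.bX g h x) * Vnext (h.ext y' uh u)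

/-- Backward value recursion on histories; `n` is the number of remaining stages,
so that `V̄_t = Vbar (T + 1 - t) t` and `V̄_{T+1} ≡ 0`. -/
def Vbar [Fintype 𝒳] [Fintype 𝒮] [Fintype 𝒴] [Fintype 𝒰] [Nonempty 𝒰]
    (g : Strat 𝒴 𝒰) (r : 𝒳 → 𝒰 → ℝ) (γ : ℝ) : (n : ℕ) → (t : ℕ) → Hist 𝒴 𝒰 t → ℝ
  | 0, _, _ => 0
  | n + 1, t, h =>
      Finset.univ.sup' Finset.univ_nonempty fun u =>
        M.Qstep g r γ h u (Vbar g r γ n (t + 1))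

/-- `Q̄_t(h_t, u)`, defined through `V̄_{t+1}`. -/
def Qbar [Fintype 𝒳] [Fintype 𝒮] [Fintype 𝒴] [Fintype 𝒰] [Nonempty 𝒰]
    (g : Strat 𝒴 𝒰) (r : 𝒳 → 𝒰 → ℝ) (γ : ℝ) (t : ℕ) (h : Hist 𝒴 𝒰 t) (u : 𝒰) : ℝ :=
  M.Qstep g r γ h u (M.Vbar g r γ (M.T - t) (t + 1))

/-- `V̄_t(h_t) = max_u Q̄_t(h_t, u)`. -/
def VbarT [Fintype 𝒳] [Fintype 𝒮] [Fintype 𝒴] [Fintype 𝒰] [Nonempty 𝒰]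
    (g : Strat 𝒴 𝒰) (r : 𝒳 → 𝒰 → ℝ) (γ : ℝ) (t : ℕ) (h : Hist 𝒴 𝒰 t) : ℝ :=
  M.Vbar g r γ (M.T + 1 - t) t h

/-- Bayes-filter update `ψ^x` of the system-state belief. -/
def bayesX [Fintype 𝒳] (b : 𝒳 → ℝ) (uh : 𝒰) (y : 𝒴) : 𝒳 → ℝ := fun x' =>
  (∑ x, M.Po y x' * M.Pt x' x uh * b x) /
    (∑ x'', ∑ x, M.Po y x'' * M.Pt x'' x uh * b x)

/-- One-step Bellman operator of the approximate human model on `Sh × Δ(𝒳)`. -/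
def Qhatstep {Sh : Type} [Fintype 𝒳] [Fintype 𝒴] [Fintype 𝒰]
    (μhat : Sh → 𝒰 → PMF 𝒰) (ψhat : Sh → 𝒰 → 𝒴 → Sh) (r : 𝒳 → 𝒰 → ℝ) (γ : ℝ)
    (π : Sh × (𝒳 → ℝ)) (u : 𝒰) (Vnext : Sh × (𝒳 → ℝ) → ℝ) : ℝ :=
  (∑ x, ∑ uh, r x uh * π.2 x * (μhat π.1 u uh).toReal) +
    γ * ∑ y' : 𝒴, ∑ uh : 𝒰, (μhat π.1 u uh).toReal *
      (∑ x', ∑ x, M.Po y' x' * M.Pt x' x uh * π.2 x) *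
      Vnext (ψhat π.1 u y', M.bayesX π.2 uh y')

/-- Approximate value recursion; `n` is the number of remaining stages, so that
`V̂_t = Vhat (T + 1 - t)` and `V̂_{T+1} ≡ 0`. -/
def Vhat {Sh : Type} [Fintype 𝒳] [Fintype 𝒴] [Fintype 𝒰] [Nonempty 𝒰]
    (μhat : Sh → 𝒰 → PMF 𝒰) (ψhat : Sh → 𝒰 → 𝒴 → Sh) (r : 𝒳 → 𝒰 → ℝ) (γ : ℝ) :
    (n : ℕ) → Sh × (𝒳 → ℝ) → ℝ
  | 0, _ => 0
  | n + 1, π =>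
      Finset.univ.sup' Finset.univ_nonempty fun u =>
        M.Qhatstep μhat ψhat r γ π u (Vhat μhat ψhat r γ n)

/-- `Q̂_t(π̂, u)`, defined through `V̂_{t+1}`. -/
def Qhat {Sh : Type} [Fintype 𝒳] [Fintype 𝒴] [Fintype 𝒰] [Nonempty 𝒰]
    (μhat : Sh → 𝒰 → PMF 𝒰) (ψhat : Sh → 𝒰 → 𝒴 → Sh) (r : 𝒳 → 𝒰 → ℝ) (γ : ℝ)
    (t : ℕ) (π : Sh × (𝒳 → ℝ)) (u : 𝒰) : ℝ :=
  M.Qhatstep μhat ψhat r γ π u (M.Vhat μhat ψhat r γ (M.T - t))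

end System

/-- Total variation distance between two distributions on a finite type,
given as real-valued mass functions. -/
def tv {α : Type} [Fintype α] (p q : α → ℝ) : ℝ := (1 / 2) * ∑ a, |p a - q a|


section Aux

open Classical

lemma snoc_eq_iff {n : ℕ} {α : Type} {v : Fin n → α} {a : α} {w : Fin (n + 1) → α} :
    Fin.snoc v a = w ↔ v = Fin.init w ∧ a = w (Fin.last n) := by
  constructor
  · rintro rfl
    exact ⟨by simp, by simp⟩
  · rintro ⟨rfl, rfl⟩
    exact Fin.snoc_init_self w

/-- Drop the last entry of a history. -/
def Hist.init {t : ℕ} (h : Hist 𝒴 𝒰 (t + 1)) : Hist 𝒴 𝒰 t :=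
  (Fin.init h.1, Fin.init h.2.1, Fin.init h.2.2)

lemma hist_eq_iff {t : ℕ} {p q : Hist 𝒴 𝒰 t} :
    p = q ↔ p.1 = q.1 ∧ p.2.1 = q.2.1 ∧ p.2.2 = q.2.2 := by
  constructor
  · rintro rfl; exact ⟨rfl, rfl, rfl⟩
  · rintro ⟨e1, e2, e3⟩; exact Prod.ext e1 (Prod.ext e2 e3)

lemma Hist.ext_eq_iff {t : ℕ} {h0 : Hist 𝒴 𝒰 t} {y : 𝒴} {a b : 𝒰} {h : Hist 𝒴 𝒰 (t + 1)} :
    h0.ext y a b = h ↔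
      h0 = h.init ∧ y = h.1 (Fin.last (t + 1)) ∧ a = h.2.1 (Fin.last t) ∧
        b = h.2.2 (Fin.last t) := by
  rw [hist_eq_iff, hist_eq_iff (p := h0) (q := h.init)]
  show Fin.snoc h0.1 y = h.1 ∧ Fin.snoc h0.2.1 a = h.2.1 ∧ Fin.snoc h0.2.2 b = h.2.2 ↔ _
  rw [snoc_eq_iff, snoc_eq_iff, snoc_eq_iff]
  show _ ↔ (h0.1 = Fin.init h.1 ∧ h0.2.1 = Fin.init h.2.1 ∧ h0.2.2 = Fin.init h.2.2) ∧ _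
  tauto

lemma vget_lt {α : Type} {m : ℕ} (v : Fin (m + 1) → α) {k : ℕ} (hk : k < m + 1) :
    vget v k = v ⟨k, hk⟩ := by
  unfold vget
  congr 1
  exact Fin.ext (Nat.mod_eq_of_lt hk)

/-- `ℝ≥0∞`-valued indicator of a proposition. -/
noncomputable def ind (P : Prop) : ℝ≥0∞ := if P then 1 else 0

lemma ind_le_one (P : Prop) : ind P ≤ 1 := by
  unfold ind; split <;> simp

lemma ind_and (P Q : Prop) : ind (P ∧ Q) = ind P * ind Q := by
  unfold ind
  by_cases hP : P <;> by_cases hQ : Q <;> simp [hP, hQ]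

lemma ind_congr {P Q : Prop} (h : P ↔ Q) : ind P = ind Q := by
  unfold ind; simp [h]

namespace System

variable (M : System 𝒳 𝒮 𝒴 𝒰 𝒲 𝒵 𝒩)

/-- Reconstruction of `X_t` from `(x₀, w)` and the history. -/
def Xrec : (t : ℕ) → Hist 𝒴 𝒰 t → 𝒳 → (Fin (M.T + 1) → 𝒲) → 𝒳
  | 0, _, x0, _ => x0
  | t + 1, h, x0, w =>
      M.f (Xrec t h.init x0 w) (h.2.1 (Fin.last t)) (vget w t)

/-- Reconstruction of `S_t` from `(s₀, n)` and the history. -/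
def Srec (g : Strat 𝒴 𝒰) : (t : ℕ) → Hist 𝒴 𝒰 t → 𝒮 → (Fin (M.T + 1) → 𝒩) → 𝒮
  | 0, _, s0, _ => s0
  | t + 1, h, s0, n =>
      M.fh (Srec g t h.init s0 n) (g t h.init) (h.1 (Fin.last (t + 1))) (vget n t)

/-- The part of the event `{H_t = h}` concerning `(x₀, w, z)`. -/
def AX : (t : ℕ) → Hist 𝒴 𝒰 t → 𝒳 → (Fin (M.T + 1) → 𝒲) → (Fin (M.T + 1) → 𝒵) → Prop
  | 0, h, x0, _, z => h.1 0 = M.o x0 (vget z 0)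
  | t + 1, h, x0, w, z => AX t h.init x0 w z ∧
      h.1 (Fin.last (t + 1)) = M.o (M.Xrec (t + 1) h x0 w) (vget z (t + 1))

/-- The part of the event `{H_t = h}` concerning `(s₀, n)`. -/
def AS (g : Strat 𝒴 𝒰) : (t : ℕ) → Hist 𝒴 𝒰 t → 𝒮 → (Fin (M.T + 1) → 𝒩) → Prop
  | 0, _, _, _ => True
  | t + 1, h, s0, n => AS g t h.init s0 n ∧
      h.2.2 (Fin.last t) = g t h.init ∧
      h.2.1 (Fin.last t) = M.gh (M.Srec g t h.init s0 n) (g t h.init)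

lemma traj_eq_of (g : Strat 𝒴 𝒰) (ω : M.Ω) :
    ∀ (t : ℕ) (h : Hist 𝒴 𝒰 t), (M.traj g ω t).2.2 = h →
      M.traj g ω t = (M.Xrec t h ω.1 ω.2.2.1, M.Srec g t h ω.2.1 ω.2.2.2.2, h) := by
  intro t
  induction t with
  | zero =>
      intro h hh
      simp only [traj] at hh ⊢
      exact Prod.ext rfl (Prod.ext rfl hh)
  | succ t ih =>
      intro h hh
      simp only [traj] at hh ⊢
      rw [Hist.ext_eq_iff] at hh
      obtain ⟨hinit, hy, huh, huai⟩ := hh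
      have hIH := ih h.init hinit
      rw [hIH] at hy huh huai ⊢
      dsimp only at hy huh huai ⊢
      refine Prod.ext ?_ (Prod.ext ?_ ?_)
      · show M.f _ _ _ = M.Xrec (t + 1) h ω.1 ω.2.2.1
        simp only [Xrec]
        rw [huh]
      · show M.fh _ _ _ _ = M.Srec g (t + 1) h ω.2.1 ω.2.2.2.2
        simp only [Srec]
        rw [hy]
      · show Hist.ext h.init _ _ _ = h
        rw [Hist.ext_eq_iff]
        exact ⟨rfl, hy, huh, huai⟩

lemma H_eq_iff (g : Strat 𝒴 𝒰) (ω : M.Ω) :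
    ∀ (t : ℕ) (h : Hist 𝒴 𝒰 t), (M.traj g ω t).2.2 = h ↔
      (M.AX t h ω.1 ω.2.2.1 ω.2.2.2.1 ∧ M.AS g t h ω.2.1 ω.2.2.2.2) := by
  intro t
  induction t with
  | zero =>
      intro h
      simp only [traj, AX, AS, and_true]
      constructor
      · rintro rfl; rfl
      · intro hy
        refine Prod.ext (funext fun i => ?_) (Prod.ext (funext fun i => i.elim0)
          (funext fun i => i.elim0))
        have : i = 0 := Fin.ext (Nat.lt_one_iff.mp i.isLt)
        rw [this]; exact hy.symm
  | succ t ih =>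
      intro h
      simp only [traj, Hist.ext_eq_iff, AX, AS]
      constructor
      · rintro ⟨hinit, hy, huh, huai⟩
        have hT := M.traj_eq_of g ω t h.init hinit
        rw [hT] at hy huh huai
        dsimp only at hy huh huai
        obtain ⟨hAX, hAS⟩ := (ih h.init).mp hinit
        refine ⟨⟨hAX, ?_⟩, hAS, huai.symm, huh.symm⟩
        simp only [Xrec]
        rw [← huh, ← hy]
      · rintro ⟨⟨hAX, hy⟩, hAS, huai, huh⟩
        have hinit : (M.traj g ω t).2.2 = h.init := (ih h.init).mpr ⟨hAX, hAS⟩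
        have hT := M.traj_eq_of g ω t h.init hinit
        rw [hT]
        dsimp only
        refine ⟨rfl, ?_, huh.symm, huai.symm⟩
        simp only [Xrec] at hy
        rw [huh] at hy
        exact hy.symm


lemma Xrec_congr {t : ℕ} (h : Hist 𝒴 𝒰 t) (x0 : 𝒳) {w w' : Fin (M.T + 1) → 𝒲}
    (hw : ∀ k < t, vget w k = vget w' k) :
    M.Xrec t h x0 w = M.Xrec t h x0 w' := by
  induction t with
  | zero => rfl
  | succ t ih =>
      simp only [Xrec]
      rw [ih h.init (fun k hk => hw k (hk.trans (Nat.lt_succ_self t))),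
        hw t (Nat.lt_succ_self t)]

lemma AX_congr {t : ℕ} (h : Hist 𝒴 𝒰 t) (x0 : 𝒳) {w w' : Fin (M.T + 1) → 𝒲}
    {z z' : Fin (M.T + 1) → 𝒵}
    (hw : ∀ k < t, vget w k = vget w' k) (hz : ∀ k ≤ t, vget z k = vget z' k) :
    M.AX t h x0 w z ↔ M.AX t h x0 w' z' := by
  induction t with
  | zero =>
      simp only [AX]
      rw [hz 0 (le_refl 0)]
  | succ t ih =>
      simp only [AX]
      rw [ih h.init (fun k hk => hw k (by omega)) (fun k hk => hz k (by omega)),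
        show M.Xrec (t + 1) h x0 w = M.Xrec (t + 1) h x0 w' from
          M.Xrec_congr h x0 hw,
        hz (t + 1) (le_refl _)]

end System

lemma sum_pmf_one {α : Type} [Fintype α] (p : PMF α) : ∑ a, p a = 1 := by
  rw [← tsum_fintype (L := SummationFilter.unconditional _)]; exact p.tsum_coe

lemma pmfVec_apply {α : Type} [Fintype α] (p : PMF α) :
    ∀ (m : ℕ) (v : Fin m → α), pmfVec p m v = ∏ i, p (v i) := by
  intro m
  induction m with
  | zero =>
      intro v
      have hv : v = Fin.elim0 := funext fun i => i.elim0
      simp [pmfVec, hv]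
  | succ m ih =>
      intro v
      simp only [pmfVec, PMF.bind_apply, PMF.map_apply, tsum_fintype]
      have hcond : ∀ (v' : Fin m → α) (a : α),
          (v = Fin.snoc v' a) ↔ (v' = Fin.init v ∧ a = v (Fin.last m)) := by
        intro v' a
        rw [eq_comm, snoc_eq_iff]
      rw [Finset.sum_eq_single (Fin.init v)]
      · rw [Finset.sum_eq_single (v (Fin.last m))]
        · rw [if_pos ((hcond _ _).mpr ⟨rfl, rfl⟩), ih, Fin.prod_univ_castSucc]
          congr 1
        · intro b _ hb
          rw [if_neg]
          intro hc
          exact hb ((hcond _ _).mp hc).2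
        · intro hmem; exact absurd (Finset.mem_univ _) hmem
      · intro v' _ hv'
        rw [Finset.sum_eq_zero, mul_zero]
        intro a _
        rw [if_neg]
        intro hc
        exact hv' ((hcond _ _).mp hc).1
      · intro hmem; exact absurd (Finset.mem_univ _) hmem

/-- Weighted sum against an i.i.d. product weight. -/
noncomputable def vSum {α : Type} [Fintype α] (p : PMF α) (m : ℕ)
    (φ : (Fin m → α) → ℝ≥0∞) : ℝ≥0∞ :=
  ∑ v : Fin m → α, φ v * ∏ i, p (v i)

lemma vSum_one {α : Type} [Fintype α] (p : PMF α) (m : ℕ) :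
    vSum p m (fun _ => 1) = 1 := by
  unfold vSum
  simp only [one_mul]
  calc ∑ v : Fin m → α, ∏ i, p (v i) = ∑ v : Fin m → α, pmfVec p m v := by
        refine Finset.sum_congr rfl fun v _ => (pmfVec_apply p m v).symm
    _ = 1 := sum_pmf_one _

lemma vSum_mono {α : Type} [Fintype α] (p : PMF α) (m : ℕ)
    {φ ψ : (Fin m → α) → ℝ≥0∞} (h : ∀ v, φ v ≤ ψ v) :
    vSum p m φ ≤ vSum p m ψ :=
  Finset.sum_le_sum fun v _ => mul_le_mul_left (h v) _

lemma vSum_le_one {α : Type} [Fintype α] (p : PMF α) (m : ℕ)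
    {φ : (Fin m → α) → ℝ≥0∞} (h : ∀ v, φ v ≤ 1) :
    vSum p m φ ≤ 1 :=
  (vSum_mono p m h).trans (le_of_eq (vSum_one p m))

lemma vSum_extract {α : Type} [Fintype α] (p : PMF α) {m : ℕ} (i : Fin m)
    (Φ : (Fin m → α) → ℝ≥0∞) (G : α → ℝ≥0∞)
    (hΦ : ∀ v v' : Fin m → α, (∀ j, j ≠ i → v j = v' j) → Φ v = Φ v') :
    (vSum p m fun v => Φ v * G (v i)) = vSum p m Φ * ∑ a, G a * p a := by
  classical
  have hne : Nonempty α := ⟨p.support_nonempty.choose⟩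
  obtain ⟨a0⟩ := hne
  set e := Equiv.funSplitAt i α with he
  have hsymm_at : ∀ (a : α) (u : { j // j ≠ i } → α), e.symm (a, u) i = a := by
    intro a u
    simp [he, Equiv.funSplitAt_symm_apply]
  have hsymm_ne : ∀ (a : α) (u : { j // j ≠ i } → α) (j : Fin m) (hj : j ≠ i),
      e.symm (a, u) j = u ⟨j, hj⟩ := by
    intro a u j hj
    simp [he, Equiv.funSplitAt_symm_apply, hj]
  have hΦ' : ∀ (a : α) (u : { j // j ≠ i } → α),
      Φ (e.symm (a, u)) = Φ (e.symm (a0, u)) := by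
    intro a u
    apply hΦ
    intro j hj
    rw [hsymm_ne a u j hj, hsymm_ne a0 u j hj]
  have hprod : ∀ (a : α) (u : { j // j ≠ i } → α),
      (∏ j, p (e.symm (a, u) j)) = p a * ∏ j : { j // j ≠ i }, p (u j) := by
    intro a u
    rw [Fintype.prod_eq_mul_prod_compl i, hsymm_at]
    congr 1
    rw [Finset.prod_subtype ({i}ᶜ : Finset (Fin m)) (p := fun j => j ≠ i)
      (by intro x; simp) (fun j => p (e.symm (a, u) j))]
    exact Finset.prod_congr rfl fun j _ => by rw [hsymm_ne a u j j.2]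
  have key : ∀ F : α → ℝ≥0∞,
      (∑ q : α × ({ j // j ≠ i } → α), Φ (e.symm q) * F q.1 * ∏ j, p (e.symm q j))
        = (∑ a, F a * p a) *
            ∑ u : { j // j ≠ i } → α,
              Φ (e.symm (a0, u)) * ∏ j : { j // j ≠ i }, p (u j) := by
    intro F
    rw [Fintype.sum_prod_type, Finset.sum_mul_sum]
    refine Finset.sum_congr rfl fun a _ => Finset.sum_congr rfl fun u _ => ?_
    rw [hΦ' a u, hprod a u]
    ring
  have lhs : (vSum p m fun v => Φ v * G (v i))
      = (∑ a, G a * p a) * ∑ u : { j // j ≠ i } → α,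
          Φ (e.symm (a0, u)) * ∏ j : { j // j ≠ i }, p (u j) := by
    unfold vSum
    rw [← Equiv.sum_comp e.symm (fun v => Φ v * G (v i) * ∏ j, p (v j)), ← key G]
    refine Finset.sum_congr rfl fun q _ => ?_
    obtain ⟨a, u⟩ := q
    rw [hsymm_at a u]
  have rhs : vSum p m Φ
      = ∑ u : { j // j ≠ i } → α,
          Φ (e.symm (a0, u)) * ∏ j : { j // j ≠ i }, p (u j) := by
    unfold vSum
    rw [← Equiv.sum_comp e.symm (fun v => Φ v * ∏ j, p (v j))]
    have := key (fun _ => 1)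
    simp only [mul_one, one_mul] at this
    rw [this, sum_pmf_one, one_mul]
  rw [lhs, rhs]
  exact mul_comm _ _

lemma bind_apply_zero {α β : Type} [Fintype α] (q : PMF α) (F : α → PMF β) (b : β)
    (hz : ∀ a, F a b = 0) : q.bind F b = 0 := by
  rw [PMF.bind_apply, tsum_fintype]
  exact Finset.sum_eq_zero fun a _ => by rw [hz a, mul_zero]

lemma map_apply_zero {α β : Type} [Fintype α] (p : PMF α) (f : α → β) (b : β)
    (h : ∀ a, b ≠ f a) : p.map f b = 0 := by
  rw [PMF.map_apply, tsum_fintype]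
  exact Finset.sum_eq_zero fun a _ => if_neg (h a)

lemma bind_apply_single {α β : Type} [Fintype α] (q : PMF α) (F : α → PMF β) (b : β) (a0 : α)
    (hz : ∀ a, a ≠ a0 → F a b = 0) : q.bind F b = q a0 * F a0 b := by
  rw [PMF.bind_apply, tsum_fintype, Finset.sum_eq_single a0]
  · intro a _ ha; rw [hz a ha, mul_zero]
  · intro hmem; exact absurd (Finset.mem_univ _) hmem

lemma map_apply_single {α β : Type} [Fintype α] (p : PMF α) (f : α → β) (a0 : α)
    (hinj : ∀ a, f a = f a0 → a = a0) : p.map f (f a0) = p a0 := by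
  rw [PMF.map_apply, tsum_fintype, Finset.sum_eq_single a0]
  · rw [if_pos rfl]
  · intro a _ ha; exact if_neg fun hc => ha (hinj a hc.symm)
  · intro hmem; exact absurd (Finset.mem_univ _) hmem

lemma prodsum_one {α : Type} [Fintype α] (p : PMF α) (m : ℕ) :
    ∑ v : Fin m → α, ∏ i, p (v i) = 1 := by
  have := vSum_one p m
  unfold vSum at this
  simpa using this

namespace System

variable (M : System 𝒳 𝒮 𝒴 𝒰 𝒲 𝒵 𝒩)

lemma pΩ_apply [Fintype 𝒳] [Fintype 𝒮] [Fintype 𝒲] [Fintype 𝒵] [Fintype 𝒩] (ω : M.Ω) :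
    M.pΩ ω = M.pX0 ω.1 * (M.pS0 ω.2.1 * ((∏ i, M.pW (ω.2.2.1 i)) *
      ((∏ i, M.pZ (ω.2.2.2.1 i)) * ∏ i, M.pN (ω.2.2.2.2 i)))) := by
  obtain ⟨x, s, w, z, n⟩ := ω
  unfold pΩ
  rw [bind_apply_single _ _ _ x (fun a ha => by
    apply bind_apply_zero; intro s'
    apply bind_apply_zero; intro w'
    apply bind_apply_zero; intro z'
    apply map_apply_zero; intro n' hc
    exact ha (congrArg Prod.fst hc).symm)]
  rw [bind_apply_single _ _ _ s (fun a ha => by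
    apply bind_apply_zero; intro w'
    apply bind_apply_zero; intro z'
    apply map_apply_zero; intro n' hc
    exact ha (congrArg (fun p => p.2.1) hc).symm)]
  rw [bind_apply_single _ _ _ w (fun a ha => by
    apply bind_apply_zero; intro z'
    apply map_apply_zero; intro n' hc
    exact ha (congrArg (fun p => p.2.2.1) hc).symm)]
  rw [bind_apply_single _ _ _ z (fun a ha => by
    apply map_apply_zero; intro n' hc
    exact ha (congrArg (fun p => p.2.2.2.1) hc).symm)]
  rw [show ((x, s, w, z, n) : M.Ω) = ((fun n' => (x, s, w, z, n')) n) from rfl,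
    map_apply_single _ _ n (fun a hc => congrArg (fun p => p.2.2.2.2) hc)]
  rw [pmfVec_apply, pmfVec_apply, pmfVec_apply]

lemma pr_eq [Fintype 𝒳] [Fintype 𝒮] [Fintype 𝒲] [Fintype 𝒵] [Fintype 𝒩] (A : Set M.Ω) :
    M.pr A = (∑ ω : M.Ω, ind (ω ∈ A) * M.pΩ ω).toReal := by
  unfold pr
  rw [PMF.toOuterMeasure_apply, tsum_fintype]
  congr 1
  refine Finset.sum_congr rfl fun ω _ => ?_
  by_cases hω : ω ∈ A
  · rw [Set.indicator_of_mem hω]; unfold ind; rw [if_pos hω, one_mul]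
  · rw [Set.indicator_of_notMem hω]; unfold ind; rw [if_neg hω, zero_mul]

/-- Splitting of the sample space into the `(x₀, w, z)` part and the `(s₀, n)` part. -/
def splitΩ : M.Ω ≃
    (𝒳 × (Fin (M.T + 1) → 𝒲) × (Fin (M.T + 1) → 𝒵)) × (𝒮 × (Fin (M.T + 1) → 𝒩)) where
  toFun ω := ((ω.1, ω.2.2.1, ω.2.2.2.1), (ω.2.1, ω.2.2.2.2))
  invFun q := (q.1.1, q.2.1, q.1.2.1, q.1.2.2, q.2.2)
  left_inv ω := rfl
  right_inv q := rfl

/-- The `(x₀, w, z)`-marginal weight of a predicate. -/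
noncomputable def XW [Fintype 𝒳] [Fintype 𝒲] [Fintype 𝒵]
    (P : 𝒳 → (Fin (M.T + 1) → 𝒲) → (Fin (M.T + 1) → 𝒵) → Prop) : ℝ≥0∞ :=
  ∑ q : 𝒳 × (Fin (M.T + 1) → 𝒲) × (Fin (M.T + 1) → 𝒵),
    ind (P q.1 q.2.1 q.2.2) *
      (M.pX0 q.1 * ((∏ i, M.pW (q.2.1 i)) * ∏ i, M.pZ (q.2.2 i)))

/-- The `(s₀, n)`-marginal weight of a predicate. -/
noncomputable def SW [Fintype 𝒮] [Fintype 𝒩]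
    (Q : 𝒮 → (Fin (M.T + 1) → 𝒩) → Prop) : ℝ≥0∞ :=
  ∑ r : 𝒮 × (Fin (M.T + 1) → 𝒩),
    ind (Q r.1 r.2) * (M.pS0 r.1 * ∏ i, M.pN (r.2 i))

lemma XW_le_one [Fintype 𝒳] [Fintype 𝒲] [Fintype 𝒵]
    (P : 𝒳 → (Fin (M.T + 1) → 𝒲) → (Fin (M.T + 1) → 𝒵) → Prop) : M.XW P ≤ 1 := by
  unfold XW
  refine (Finset.sum_le_sum fun q _ =>
    (mul_le_mul_left (ind_le_one _) _).trans_eq (one_mul _)).trans (le_of_eq ?_)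
  simp only [Fintype.sum_prod_type]
  have expand : ((∑ x0, M.pX0 x0) *
      ((∑ w : Fin (M.T + 1) → 𝒲, ∏ i, M.pW (w i)) *
        (∑ z : Fin (M.T + 1) → 𝒵, ∏ i, M.pZ (z i))))
      = ∑ x0, ∑ w : Fin (M.T + 1) → 𝒲, ∑ z : Fin (M.T + 1) → 𝒵,
          M.pX0 x0 * ((∏ i, M.pW (w i)) * ∏ i, M.pZ (z i)) := by
    simp only [Finset.sum_mul, Finset.mul_sum]
    rw [Finset.sum_comm]
    refine Eq.trans (Finset.sum_congr rfl fun w _ => Finset.sum_comm) ?_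
    rw [Finset.sum_comm]
  rw [← expand, sum_pmf_one, prodsum_one, prodsum_one, one_mul, mul_one]

lemma SW_le_one [Fintype 𝒮] [Fintype 𝒩]
    (Q : 𝒮 → (Fin (M.T + 1) → 𝒩) → Prop) : M.SW Q ≤ 1 := by
  unfold SW
  refine (Finset.sum_le_sum fun r _ =>
    (mul_le_mul_left (ind_le_one _) _).trans_eq (one_mul _)).trans (le_of_eq ?_)
  simp only [Fintype.sum_prod_type]
  have expand : ((∑ s0, M.pS0 s0) * (∑ n : Fin (M.T + 1) → 𝒩, ∏ i, M.pN (n i)))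
      = ∑ s0, ∑ n : Fin (M.T + 1) → 𝒩, M.pS0 s0 * ∏ i, M.pN (n i) := by
    simp only [Finset.sum_mul, Finset.mul_sum]
    exact Finset.sum_comm
  rw [← expand, sum_pmf_one, prodsum_one, mul_one]

lemma pr_split [Fintype 𝒳] [Fintype 𝒮] [Fintype 𝒲] [Fintype 𝒵] [Fintype 𝒩] (A : Set M.Ω)
    (P : 𝒳 → (Fin (M.T + 1) → 𝒲) → (Fin (M.T + 1) → 𝒵) → Prop)
    (Q : 𝒮 → (Fin (M.T + 1) → 𝒩) → Prop)
    (hA : ∀ ω : M.Ω, ω ∈ A ↔ P ω.1 ω.2.2.1 ω.2.2.2.1 ∧ Q ω.2.1 ω.2.2.2.2) :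
    M.pr A = (M.XW P * M.SW Q).toReal := by
  rw [pr_eq]
  congr 1
  rw [← Equiv.sum_comp (M.splitΩ).symm (fun ω => ind (ω ∈ A) * M.pΩ ω)]
  unfold XW SW
  rw [Finset.sum_mul_sum, Fintype.sum_prod_type]
  refine Finset.sum_congr rfl fun q _ => Finset.sum_congr rfl fun r _ => ?_
  rw [ind_congr (hA _), ind_and, M.pΩ_apply _]
  dsimp only [splitΩ, Equiv.coe_fn_symm_mk]
  ring

end System

lemma vSum_congr {α : Type} [Fintype α] (p : PMF α) (m : ℕ)
    {φ ψ : (Fin m → α) → ℝ≥0∞} (h : ∀ v, φ v = ψ v) : vSum p m φ = vSum p m ψ :=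
  Finset.sum_congr rfl fun v _ => by rw [h v]

lemma vSum_smul {α : Type} [Fintype α] (p : PMF α) (m : ℕ)
    (φ : (Fin m → α) → ℝ≥0∞) (c : ℝ≥0∞) :
    vSum p m (fun v => φ v * c) = vSum p m φ * c := by
  unfold vSum
  rw [Finset.sum_mul]
  exact Finset.sum_congr rfl fun v _ => by ring

lemma sum_ind_eq {α : Type} [Fintype α] (a0 : α) : ∑ a, ind (a0 = a) = 1 := by
  rw [Finset.sum_eq_single a0]
  · unfold ind; rw [if_pos rfl]
  · intro b _ hb; unfold ind; rw [if_neg fun hc => hb hc.symm]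
  · intro hmem; exact absurd (Finset.mem_univ _) hmem

namespace System

variable (M : System 𝒳 𝒮 𝒴 𝒰 𝒲 𝒵 𝒩)

/-- `ℝ≥0∞`-valued observation kernel. -/
noncomputable def PoE [Fintype 𝒵] (y : 𝒴) (x' : 𝒳) : ℝ≥0∞ :=
  ∑ zc, ind (M.o x' zc = y) * M.pZ zc

/-- `ℝ≥0∞`-valued transition kernel. -/
noncomputable def PtE [Fintype 𝒲] (x' x : 𝒳) (u : 𝒰) : ℝ≥0∞ :=
  ∑ wc, ind (M.f x u wc = x') * M.pW wc

lemma PoE_le_one [Fintype 𝒵] (y : 𝒴) (x' : 𝒳) : M.PoE y x' ≤ 1 := by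
  unfold PoE
  refine (Finset.sum_le_sum fun zc _ =>
    (mul_le_mul_left (ind_le_one _) _).trans_eq (one_mul _)).trans (le_of_eq ?_)
  exact sum_pmf_one _

lemma PtE_le_one [Fintype 𝒲] (x' x : 𝒳) (u : 𝒰) : M.PtE x' x u ≤ 1 := by
  unfold PtE
  refine (Finset.sum_le_sum fun wc _ =>
    (mul_le_mul_left (ind_le_one _) _).trans_eq (one_mul _)).trans (le_of_eq ?_)
  exact sum_pmf_one _

lemma Po_eq [Fintype 𝒵] (y : 𝒴) (x' : 𝒳) : M.Po y x' = (M.PoE y x').toReal := by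
  unfold Po PoE
  rw [PMF.toOuterMeasure_apply, tsum_fintype]
  congr 1
  refine Finset.sum_congr rfl fun zc _ => ?_
  by_cases hc : M.o x' zc = y
  · rw [Set.indicator_of_mem (show zc ∈ {z | M.o x' z = y} from hc)]
    unfold ind; rw [if_pos hc, one_mul]
  · rw [Set.indicator_of_notMem (show zc ∉ {z | M.o x' z = y} from hc)]
    unfold ind; rw [if_neg hc, zero_mul]

lemma Pt_eq [Fintype 𝒲] (x' x : 𝒳) (u : 𝒰) : M.Pt x' x u = (M.PtE x' x u).toReal := by
  unfold Pt PtE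
  rw [PMF.toOuterMeasure_apply, tsum_fintype]
  congr 1
  refine Finset.sum_congr rfl fun wc _ => ?_
  by_cases hc : M.f x u wc = x'
  · rw [Set.indicator_of_mem (show wc ∈ {w | M.f x u w = x'} from hc)]
    unfold ind; rw [if_pos hc, one_mul]
  · rw [Set.indicator_of_notMem (show wc ∉ {w | M.f x u w = x'} from hc)]
    unfold ind; rw [if_neg hc, zero_mul]

lemma XW_nested [Fintype 𝒳] [Fintype 𝒲] [Fintype 𝒵]
    (P : 𝒳 → (Fin (M.T + 1) → 𝒲) → (Fin (M.T + 1) → 𝒵) → Prop) :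
    M.XW P = ∑ x0, M.pX0 x0 *
      vSum M.pW (M.T + 1) (fun w => vSum M.pZ (M.T + 1) (fun z => ind (P x0 w z))) := by
  unfold XW vSum
  simp only [Fintype.sum_prod_type, Finset.mul_sum, Finset.sum_mul]
  refine Finset.sum_congr rfl fun x0 _ => ?_
  refine Finset.sum_congr rfl fun w _ => Finset.sum_congr rfl fun z _ => by ring

lemma XW_decompose [Fintype 𝒳] [Fintype 𝒲] [Fintype 𝒵]
    (P : 𝒳 → (Fin (M.T + 1) → 𝒲) → (Fin (M.T + 1) → 𝒵) → Prop)
    (F : 𝒳 → (Fin (M.T + 1) → 𝒲) → 𝒳) :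
    M.XW P = ∑ x : 𝒳, M.XW (fun x0 w z => P x0 w z ∧ F x0 w = x) := by
  unfold XW
  rw [Finset.sum_comm]
  refine Finset.sum_congr rfl fun q _ => ?_
  rw [← Finset.sum_mul]
  congr 1
  have e1 : ∀ x : 𝒳, ind (P q.1 q.2.1 q.2.2 ∧ F q.1 q.2.1 = x)
      = ind (P q.1 q.2.1 q.2.2) * ind (F q.1 q.2.1 = x) := fun x => ind_and _ _
  rw [Finset.sum_congr rfl fun x _ => e1 x, ← Finset.mul_sum, sum_ind_eq, mul_one]

end System

namespace System

variable (M : System 𝒳 𝒮 𝒴 𝒰 𝒲 𝒵 𝒩)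

lemma XW_congr [Fintype 𝒳] [Fintype 𝒲] [Fintype 𝒵]
    {P Q : 𝒳 → (Fin (M.T + 1) → 𝒲) → (Fin (M.T + 1) → 𝒵) → Prop}
    (hPQ : ∀ x0 w z, P x0 w z ↔ Q x0 w z) : M.XW P = M.XW Q := by
  unfold XW
  exact Finset.sum_congr rfl fun q _ => by rw [ind_congr (hPQ q.1 q.2.1 q.2.2)]

lemma SW_congr [Fintype 𝒮] [Fintype 𝒩]
    {P Q : 𝒮 → (Fin (M.T + 1) → 𝒩) → Prop}
    (hPQ : ∀ s0 n, P s0 n ↔ Q s0 n) : M.SW P = M.SW Q := by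
  unfold SW
  exact Finset.sum_congr rfl fun r _ => by rw [ind_congr (hPQ r.1 r.2)]

lemma XW_extract_one [Fintype 𝒳] [Fintype 𝒲] [Fintype 𝒵]
    (t : ℕ) (ht : t < M.T) (h : Hist 𝒴 𝒰 t) (uh : 𝒰) (y' : 𝒴) (x x' : 𝒳) :
    M.XW (fun x0 w z => (M.AX t h x0 w z ∧ M.Xrec t h x0 w = x) ∧
        (M.f x uh (vget w t) = x' ∧ M.o x' (vget z (t + 1)) = y'))
      = M.PoE y' x' * M.PtE x' x uh *
          M.XW (fun x0 w z => M.AX t h x0 w z ∧ M.Xrec t h x0 w = x) := by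
  have htT : t < M.T + 1 := by omega
  have ht1 : t + 1 < M.T + 1 := by omega
  rw [M.XW_nested, M.XW_nested]
  have step1 : ∀ (x0 : 𝒳) (w : Fin (M.T + 1) → 𝒲),
      vSum M.pZ (M.T + 1) (fun z => ind ((M.AX t h x0 w z ∧ M.Xrec t h x0 w = x) ∧
          (M.f x uh (vget w t) = x' ∧ M.o x' (vget z (t + 1)) = y')))
        = (vSum M.pZ (M.T + 1)
              (fun z => ind (M.AX t h x0 w z ∧ M.Xrec t h x0 w = x))
            * ind (M.f x uh (vget w t) = x')) * M.PoE y' x' := by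
    intro x0 w
    have e1 : ∀ z : Fin (M.T + 1) → 𝒵,
        ind ((M.AX t h x0 w z ∧ M.Xrec t h x0 w = x) ∧
            (M.f x uh (vget w t) = x' ∧ M.o x' (vget z (t + 1)) = y'))
          = (ind (M.AX t h x0 w z ∧ M.Xrec t h x0 w = x) *
              ind (M.f x uh (vget w t) = x')) *
              ind (M.o x' (z ⟨t + 1, ht1⟩) = y') := by
      intro z
      rw [← ind_and, ← ind_and]
      apply ind_congr
      rw [vget_lt _ ht1]
      tauto
    have hdepZ : ∀ v v' : Fin (M.T + 1) → 𝒵,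
        (∀ j, j ≠ (⟨t + 1, ht1⟩ : Fin (M.T + 1)) → v j = v' j) →
        (fun z => ind (M.AX t h x0 w z ∧ M.Xrec t h x0 w = x) *
          ind (M.f x uh (vget w t) = x')) v
        = (fun z => ind (M.AX t h x0 w z ∧ M.Xrec t h x0 w = x) *
          ind (M.f x uh (vget w t) = x')) v' := by
      intro v v' hvv
      have hAX : M.AX t h x0 w v ↔ M.AX t h x0 w v' := by
        refine M.AX_congr h x0 (fun k hk => rfl) (fun k hk => ?_)
        rw [vget_lt _ (show k < M.T + 1 by omega), vget_lt _ (show k < M.T + 1 by omega)]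
        exact hvv _ (fun hc => by
          have hval := congrArg Fin.val hc
          simp only [] at hval
          omega)
      simp only []
      rw [ind_congr (and_congr hAX Iff.rfl)]
    calc vSum M.pZ (M.T + 1) (fun z => ind ((M.AX t h x0 w z ∧ M.Xrec t h x0 w = x) ∧
          (M.f x uh (vget w t) = x' ∧ M.o x' (vget z (t + 1)) = y')))
        = vSum M.pZ (M.T + 1) (fun z =>
            (ind (M.AX t h x0 w z ∧ M.Xrec t h x0 w = x) *
              ind (M.f x uh (vget w t) = x')) *
              ind (M.o x' (z ⟨t + 1, ht1⟩) = y')) := vSum_congr _ _ e1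
      _ = vSum M.pZ (M.T + 1) (fun z =>
            ind (M.AX t h x0 w z ∧ M.Xrec t h x0 w = x) *
              ind (M.f x uh (vget w t) = x'))
          * ∑ a, ind (M.o x' a = y') * M.pZ a :=
        vSum_extract M.pZ ⟨t + 1, ht1⟩ _ (fun a => ind (M.o x' a = y')) hdepZ
      _ = (vSum M.pZ (M.T + 1)
            (fun z => ind (M.AX t h x0 w z ∧ M.Xrec t h x0 w = x))
          * ind (M.f x uh (vget w t) = x')) * M.PoE y' x' := by
        rw [vSum_smul]
        rfl
  have hdepW : ∀ (x0 : 𝒳) (v v' : Fin (M.T + 1) → 𝒲),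
      (∀ j, j ≠ (⟨t, htT⟩ : Fin (M.T + 1)) → v j = v' j) →
      vSum M.pZ (M.T + 1) (fun z => ind (M.AX t h x0 v z ∧ M.Xrec t h x0 v = x))
        = vSum M.pZ (M.T + 1) (fun z => ind (M.AX t h x0 v' z ∧ M.Xrec t h x0 v' = x)) := by
    intro x0 v v' hvv
    have hw : ∀ k < t, vget v k = vget v' k := by
      intro k hk
      rw [vget_lt _ (show k < M.T + 1 by omega), vget_lt _ (show k < M.T + 1 by omega)]
      exact hvv _ (fun hc => by
        have hval := congrArg Fin.val hc
        simp only [] at hval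
        omega)
    have hX : M.Xrec t h x0 v = M.Xrec t h x0 v' := M.Xrec_congr h x0 hw
    refine vSum_congr _ _ fun z => ?_
    rw [ind_congr (and_congr (M.AX_congr h x0 hw fun k _ => rfl) (by rw [hX]))]
  trans (∑ x0, M.pX0 x0 * ((vSum M.pW (M.T + 1) (fun w => vSum M.pZ (M.T + 1)
      (fun z => ind (M.AX t h x0 w z ∧ M.Xrec t h x0 w = x)))
      * M.PtE x' x uh) * M.PoE y' x'))
  · refine Finset.sum_congr rfl fun x0 _ => ?_
    congr 1
    calc vSum M.pW (M.T + 1) (fun w => vSum M.pZ (M.T + 1)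
            (fun z => ind ((M.AX t h x0 w z ∧ M.Xrec t h x0 w = x) ∧
              (M.f x uh (vget w t) = x' ∧ M.o x' (vget z (t + 1)) = y'))))
        = vSum M.pW (M.T + 1) (fun w =>
            (vSum M.pZ (M.T + 1) (fun z => ind (M.AX t h x0 w z ∧ M.Xrec t h x0 w = x)) *
              ind (M.f x uh (w ⟨t, htT⟩) = x')) * M.PoE y' x') := by
          refine vSum_congr _ _ fun w => ?_
          rw [step1 x0 w, vget_lt _ htT]
      _ = vSum M.pW (M.T + 1) (fun w =>
            vSum M.pZ (M.T + 1) (fun z => ind (M.AX t h x0 w z ∧ M.Xrec t h x0 w = x)) *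
              ind (M.f x uh (w ⟨t, htT⟩) = x')) * M.PoE y' x' :=
          vSum_smul M.pW (M.T + 1) _ (M.PoE y' x')
      _ = (vSum M.pW (M.T + 1) (fun w =>
            vSum M.pZ (M.T + 1) (fun z => ind (M.AX t h x0 w z ∧ M.Xrec t h x0 w = x)))
            * ∑ a, ind (M.f x uh a = x') * M.pW a) * M.PoE y' x' := by
          rw [vSum_extract M.pW ⟨t, htT⟩
            (fun w => vSum M.pZ (M.T + 1)
              (fun z => ind (M.AX t h x0 w z ∧ M.Xrec t h x0 w = x)))
            (fun a => ind (M.f x uh a = x')) (hdepW x0)]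
      _ = (vSum M.pW (M.T + 1) (fun w =>
            vSum M.pZ (M.T + 1) (fun z => ind (M.AX t h x0 w z ∧ M.Xrec t h x0 w = x)))
            * M.PtE x' x uh) * M.PoE y' x' := rfl
  · rw [Finset.mul_sum]
    exact Finset.sum_congr rfl fun x0 _ => by ring

lemma XW_extract [Fintype 𝒳] [Fintype 𝒲] [Fintype 𝒵]
    (t : ℕ) (ht : t < M.T) (h : Hist 𝒴 𝒰 t) (uh : 𝒰) (y' : 𝒴) :
    M.XW (fun x0 w z => M.AX t h x0 w z ∧
        M.o (M.f (M.Xrec t h x0 w) uh (vget w t)) (vget z (t + 1)) = y')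
      = ∑ x', ∑ x, M.PoE y' x' * M.PtE x' x uh *
          M.XW (fun x0 w z => M.AX t h x0 w z ∧ M.Xrec t h x0 w = x) := by
  calc M.XW (fun x0 w z => M.AX t h x0 w z ∧
          M.o (M.f (M.Xrec t h x0 w) uh (vget w t)) (vget z (t + 1)) = y')
      = ∑ x : 𝒳, M.XW (fun x0 w z => (M.AX t h x0 w z ∧
          M.o (M.f (M.Xrec t h x0 w) uh (vget w t)) (vget z (t + 1)) = y') ∧
          M.Xrec t h x0 w = x) :=
        M.XW_decompose _ (fun x0 w => M.Xrec t h x0 w)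
    _ = ∑ x : 𝒳, ∑ x' : 𝒳, M.XW (fun x0 w z => ((M.AX t h x0 w z ∧
          M.o (M.f (M.Xrec t h x0 w) uh (vget w t)) (vget z (t + 1)) = y') ∧
          M.Xrec t h x0 w = x) ∧ M.f x uh (vget w t) = x') :=
        Finset.sum_congr rfl fun x _ =>
          M.XW_decompose _ (fun x0 w => M.f x uh (vget w t))
    _ = ∑ x : 𝒳, ∑ x' : 𝒳, M.XW (fun x0 w z => (M.AX t h x0 w z ∧ M.Xrec t h x0 w = x) ∧
          (M.f x uh (vget w t) = x' ∧ M.o x' (vget z (t + 1)) = y')) := by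
        refine Finset.sum_congr rfl fun x _ => Finset.sum_congr rfl fun x' _ => ?_
        refine M.XW_congr fun x0 w z => ?_
        constructor
        · rintro ⟨⟨⟨hAX, hobs⟩, hXr⟩, hf⟩
          refine ⟨⟨hAX, hXr⟩, hf, ?_⟩
          rw [← hf, ← hXr]
          exact hobs
        · rintro ⟨⟨hAX, hXr⟩, hf, hobs⟩
          refine ⟨⟨⟨hAX, ?_⟩, hXr⟩, hf⟩
          rw [hXr, hf]
          exact hobs
    _ = ∑ x : 𝒳, ∑ x' : 𝒳, M.PoE y' x' * M.PtE x' x uh *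
          M.XW (fun x0 w z => M.AX t h x0 w z ∧ M.Xrec t h x0 w = x) :=
        Finset.sum_congr rfl fun x _ => Finset.sum_congr rfl fun x' _ =>
          M.XW_extract_one t ht h uh y' x x'
    _ = ∑ x' : 𝒳, ∑ x : 𝒳, M.PoE y' x' * M.PtE x' x uh *
          M.XW (fun x0 w z => M.AX t h x0 w z ∧ M.Xrec t h x0 w = x) :=
        Finset.sum_comm

end System

end Aux

/-- the one-step predicted observation distribution depends on the
history only through `b_t^x` (and is independent of the human control law). -/
theorem statement_7 {𝒳 𝒮 𝒴 𝒰 𝒲 𝒵 𝒩 : Type}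
    [Fintype 𝒳] [Fintype 𝒮] [Fintype 𝒴] [Fintype 𝒰] [Fintype 𝒲] [Fintype 𝒵] [Fintype 𝒩]
    [Nonempty 𝒳] [Nonempty 𝒮] [Nonempty 𝒴] [Nonempty 𝒰] [DecidableEq 𝒰]
    (M : System 𝒳 𝒮 𝒴 𝒰 𝒲 𝒵 𝒩) (g : Strat 𝒴 𝒰)
    (t : ℕ) (ht : t < M.T) (h : Hist 𝒴 𝒰 t)
    (hpos : 0 < M.pr {ω | M.H g ω t = h})
    (uh : 𝒰) (hu : 0 < M.cpr {ω | M.Uh g ω t = uh} {ω | M.H g ω t = h}) (y' : 𝒴) :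
    M.cpr {ω | M.Y g ω (t + 1) = y'} {ω | M.H g ω t = h ∧ M.Uh g ω t = uh}
      = ∑ x', ∑ x, M.Po y' x' * M.Pt x' x uh * M.bX g h x := by
  classical
  -- pointwise descriptions of the processes on the event `{H_t = h}`
  have hUhval : ∀ ω : M.Ω, M.H g ω t = h →
      M.Uh g ω t = M.gh (M.Srec g t h ω.2.1 ω.2.2.2.2) (g t h) := by
    intro ω hH
    have hT := M.traj_eq_of g ω t h hH
    show M.gh (M.traj g ω t).2.1 (g t (M.traj g ω t).2.2) = _
    rw [hT]
  have hXval : ∀ ω : M.Ω, M.H g ω t = h →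
      M.X g ω t = M.Xrec t h ω.1 ω.2.2.1 := by
    intro ω hH
    have hT := M.traj_eq_of g ω t h hH
    show (M.traj g ω t).1 = _
    rw [hT]
  have hYval : ∀ ω : M.Ω, M.H g ω t = h →
      M.Y g ω (t + 1) = M.o (M.f (M.Xrec t h ω.1 ω.2.2.1)
        (M.gh (M.Srec g t h ω.2.1 ω.2.2.2.2) (g t h)) (vget ω.2.2.1 t))
        (vget ω.2.2.2.1 (t + 1)) := by
    intro ω hH
    have hT := M.traj_eq_of g ω t h hH
    show (M.traj g ω (t + 1)).2.2.1 (Fin.last (t + 1)) = _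
    simp only [System.traj]
    rw [hT]
    dsimp only [Hist.ext]
    rw [Fin.snoc_last]
  -- event factorizations
  have hB : ∀ ω : M.Ω, ω ∈ {ω : M.Ω | M.H g ω t = h} ↔
      M.AX t h ω.1 ω.2.2.1 ω.2.2.2.1 ∧ M.AS g t h ω.2.1 ω.2.2.2.2 :=
    fun ω => M.H_eq_iff g ω t h
  have hBu : ∀ ω : M.Ω, ω ∈ {ω : M.Ω | M.H g ω t = h ∧ M.Uh g ω t = uh} ↔
      M.AX t h ω.1 ω.2.2.1 ω.2.2.2.1 ∧
      (M.AS g t h ω.2.1 ω.2.2.2.2 ∧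
        M.gh (M.Srec g t h ω.2.1 ω.2.2.2.2) (g t h) = uh) := by
    intro ω
    constructor
    · rintro ⟨hH, hU⟩
      obtain ⟨hAX, hAS⟩ := (M.H_eq_iff g ω t h).mp hH
      exact ⟨hAX, hAS, (hUhval ω hH).symm.trans hU⟩
    · rintro ⟨hAX, hAS, hu'⟩
      have hH : M.H g ω t = h := (M.H_eq_iff g ω t h).mpr ⟨hAX, hAS⟩
      exact ⟨hH, (hUhval ω hH).trans hu'⟩
  have hBu' : ∀ ω : M.Ω,
      ω ∈ ({ω : M.Ω | M.Uh g ω t = uh} ∩ {ω : M.Ω | M.H g ω t = h}) ↔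
      M.AX t h ω.1 ω.2.2.1 ω.2.2.2.1 ∧
      (M.AS g t h ω.2.1 ω.2.2.2.2 ∧
        M.gh (M.Srec g t h ω.2.1 ω.2.2.2.2) (g t h) = uh) := by
    intro ω
    rw [show ω ∈ ({ω : M.Ω | M.Uh g ω t = uh} ∩ {ω : M.Ω | M.H g ω t = h}) ↔
        ω ∈ {ω : M.Ω | M.H g ω t = h ∧ M.Uh g ω t = uh} from
      ⟨fun ⟨h1, h2⟩ => ⟨h2, h1⟩, fun ⟨h1, h2⟩ => ⟨h2, h1⟩⟩]
    exact hBu ω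
  have hBy : ∀ ω : M.Ω,
      ω ∈ ({ω : M.Ω | M.Y g ω (t + 1) = y'} ∩
        {ω : M.Ω | M.H g ω t = h ∧ M.Uh g ω t = uh}) ↔
      (M.AX t h ω.1 ω.2.2.1 ω.2.2.2.1 ∧
        M.o (M.f (M.Xrec t h ω.1 ω.2.2.1) uh (vget ω.2.2.1 t))
          (vget ω.2.2.2.1 (t + 1)) = y') ∧
      (M.AS g t h ω.2.1 ω.2.2.2.2 ∧
        M.gh (M.Srec g t h ω.2.1 ω.2.2.2.2) (g t h) = uh) := by
    intro ω
    constructor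
    · rintro ⟨hYv, hH, hU⟩
      obtain ⟨hAX, hAS⟩ := (M.H_eq_iff g ω t h).mp hH
      have hu' : M.gh (M.Srec g t h ω.2.1 ω.2.2.2.2) (g t h) = uh :=
        (hUhval ω hH).symm.trans hU
      refine ⟨⟨hAX, ?_⟩, hAS, hu'⟩
      have hYv2 : M.Y g ω (t + 1) = y' := hYv
      rw [hYval ω hH, hu'] at hYv2
      exact hYv2
    · rintro ⟨⟨hAX, hobs⟩, hAS, hu'⟩
      have hH : M.H g ω t = h := (M.H_eq_iff g ω t h).mpr ⟨hAX, hAS⟩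
      refine ⟨?_, hH, (hUhval ω hH).trans hu'⟩
      show M.Y g ω (t + 1) = y'
      rw [hYval ω hH, hu']
      exact hobs
  have hBx : ∀ x : 𝒳, ∀ ω : M.Ω,
      ω ∈ ({ω : M.Ω | M.X g ω t = x} ∩ {ω : M.Ω | M.H g ω t = h}) ↔
      (M.AX t h ω.1 ω.2.2.1 ω.2.2.2.1 ∧ M.Xrec t h ω.1 ω.2.2.1 = x) ∧
        M.AS g t h ω.2.1 ω.2.2.2.2 := by
    intro x ω
    constructor
    · rintro ⟨hXv, hH⟩
      obtain ⟨hAX, hAS⟩ := (M.H_eq_iff g ω t h).mp hH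
      exact ⟨⟨hAX, (hXval ω hH).symm.trans hXv⟩, hAS⟩
    · rintro ⟨⟨hAX, hXv⟩, hAS⟩
      have hH : M.H g ω t = h := (M.H_eq_iff g ω t h).mpr ⟨hAX, hAS⟩
      exact ⟨(hXval ω hH).trans hXv, hH⟩
  -- probability formulas
  have f1 := M.pr_split {ω : M.Ω | M.H g ω t = h}
    (fun x0 w z => M.AX t h x0 w z) (fun s0 n => M.AS g t h s0 n) hB
  have f2 := M.pr_split {ω : M.Ω | M.H g ω t = h ∧ M.Uh g ω t = uh}
    (fun x0 w z => M.AX t h x0 w z)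
    (fun s0 n => M.AS g t h s0 n ∧ M.gh (M.Srec g t h s0 n) (g t h) = uh) hBu
  have f2' := M.pr_split ({ω : M.Ω | M.Uh g ω t = uh} ∩ {ω : M.Ω | M.H g ω t = h})
    (fun x0 w z => M.AX t h x0 w z)
    (fun s0 n => M.AS g t h s0 n ∧ M.gh (M.Srec g t h s0 n) (g t h) = uh) hBu'
  have f4 := M.pr_split ({ω : M.Ω | M.Y g ω (t + 1) = y'} ∩
      {ω : M.Ω | M.H g ω t = h ∧ M.Uh g ω t = uh})
    (fun x0 w z => M.AX t h x0 w z ∧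
      M.o (M.f (M.Xrec t h x0 w) uh (vget w t)) (vget z (t + 1)) = y')
    (fun s0 n => M.AS g t h s0 n ∧ M.gh (M.Srec g t h s0 n) (g t h) = uh) hBy
  have f5 : ∀ x : 𝒳, M.pr ({ω : M.Ω | M.X g ω t = x} ∩ {ω : M.Ω | M.H g ω t = h})
      = (M.XW (fun x0 w z => M.AX t h x0 w z ∧ M.Xrec t h x0 w = x) *
          M.SW (fun s0 n => M.AS g t h s0 n)).toReal := fun x =>
    M.pr_split _ _ _ (hBx x)
  -- abbreviations
  set a := M.XW (fun x0 w z => M.AX t h x0 w z) with ha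
  set ay := M.XW (fun x0 w z => M.AX t h x0 w z ∧
    M.o (M.f (M.Xrec t h x0 w) uh (vget w t)) (vget z (t + 1)) = y') with hay
  set ax : 𝒳 → ℝ≥0∞ := fun x =>
    M.XW (fun x0 w z => M.AX t h x0 w z ∧ M.Xrec t h x0 w = x) with hax
  set b := M.SW (fun s0 n => M.AS g t h s0 n) with hb
  set bu := M.SW (fun s0 n => M.AS g t h s0 n ∧
    M.gh (M.Srec g t h s0 n) (g t h) = uh) with hbu
  have hExtract : ay = ∑ x', ∑ x, M.PoE y' x' * M.PtE x' x uh * ax x :=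
    M.XW_extract t ht h uh y'
  -- finiteness
  have haT : a ≠ ⊤ := ne_top_of_le_ne_top ENNReal.one_ne_top (M.XW_le_one _)
  have haxT : ∀ x, ax x ≠ ⊤ :=
    fun x => ne_top_of_le_ne_top ENNReal.one_ne_top (M.XW_le_one _)
  have hbT : b ≠ ⊤ := ne_top_of_le_ne_top ENNReal.one_ne_top (M.SW_le_one _)
  have hbuT : bu ≠ ⊤ := ne_top_of_le_ne_top ENNReal.one_ne_top (M.SW_le_one _)
  -- positivity
  rw [f1] at hpos
  have hab : a * b ≠ 0 := by
    intro h0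
    rw [h0] at hpos
    simp at hpos
  have ha0 : a ≠ 0 := fun h0 => hab (by rw [h0, zero_mul])
  have hb0 : b ≠ 0 := fun h0 => hab (by rw [h0, mul_zero])
  replace hu : 0 < M.pr ({ω : M.Ω | M.Uh g ω t = uh} ∩ {ω : M.Ω | M.H g ω t = h}) /
      M.pr {ω : M.Ω | M.H g ω t = h} := hu
  rw [f1, f2'] at hu
  have hnum : 0 < (a * bu).toReal := by
    rcases div_pos_iff.mp hu with ⟨hn, _⟩ | ⟨_, hd⟩
    · exact hn
    · exact absurd hd (not_lt.mpr ENNReal.toReal_nonneg)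
  have habu : a * bu ≠ 0 := by
    intro h0
    rw [h0] at hnum
    simp at hnum
  have hbu0 : bu ≠ 0 := fun h0 => habu (by rw [h0, mul_zero])
  -- real versions
  have haR : a.toReal ≠ 0 := by
    intro h0
    rcases (ENNReal.toReal_eq_zero_iff _).mp h0 with h0 | h0
    · exact ha0 h0
    · exact haT h0
  have hbR : b.toReal ≠ 0 := by
    intro h0
    rcases (ENNReal.toReal_eq_zero_iff _).mp h0 with h0 | h0
    · exact hb0 h0
    · exact hbT h0
  have hbuR : bu.toReal ≠ 0 := by
    intro h0
    rcases (ENNReal.toReal_eq_zero_iff _).mp h0 with h0 | h0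
    · exact hbu0 h0
    · exact hbuT h0
  -- compute the left-hand side
  have lhs_eq : M.cpr {ω : M.Ω | M.Y g ω (t + 1) = y'}
      {ω : M.Ω | M.H g ω t = h ∧ M.Uh g ω t = uh}
      = ay.toReal / a.toReal := by
    show M.pr _ / M.pr _ = _
    rw [f4, f2, ENNReal.toReal_mul, ENNReal.toReal_mul,
      mul_div_mul_right _ _ hbuR]
  rw [lhs_eq]
  -- compute the right-hand side
  have rhs_eq : ∀ x' x : 𝒳, M.Po y' x' * M.Pt x' x uh * M.bX g h x
      = ((M.PoE y' x' * M.PtE x' x uh * ax x).toReal) / a.toReal := by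
    intro x' x
    have : M.bX g h x = (ax x).toReal / a.toReal := by
      show M.pr _ / M.pr _ = _
      rw [f5 x, f1, ENNReal.toReal_mul, ENNReal.toReal_mul,
        mul_div_mul_right _ _ hbR]
    rw [this, M.Po_eq, M.Pt_eq, ENNReal.toReal_mul, ENNReal.toReal_mul]
    ring
  calc ay.toReal / a.toReal
      = (∑ x', ∑ x, (M.PoE y' x' * M.PtE x' x uh * ax x).toReal) / a.toReal := by
        congr 1
        rw [hExtract]
        rw [ENNReal.toReal_sum (fun x' _ => ENNReal.sum_ne_top.mpr fun x _ =>
          ENNReal.mul_ne_top (ENNReal.mul_ne_top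
            (ne_top_of_le_ne_top ENNReal.one_ne_top (M.PoE_le_one y' x'))
            (ne_top_of_le_ne_top ENNReal.one_ne_top (M.PtE_le_one x' x uh)))
            (haxT x))]
        exact Finset.sum_congr rfl fun x' _ =>
          ENNReal.toReal_sum fun x _ =>
            ENNReal.mul_ne_top (ENNReal.mul_ne_top
              (ne_top_of_le_ne_top ENNReal.one_ne_top (M.PoE_le_one y' x'))
              (ne_top_of_le_ne_top ENNReal.one_ne_top (M.PtE_le_one x' x uh)))
              (haxT x)
    _ = ∑ x', ∑ x, M.Po y' x' * M.Pt x' x uh * M.bX g h x := by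
        rw [Finset.sum_div]
        refine Finset.sum_congr rfl fun x' _ => ?_
        rw [Finset.sum_div]
        refine Finset.sum_congr rfl fun x _ => ?_
        rw [rhs_eq x' x]

end CPHS
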